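/- Let Ē, Ā, B̄ be n×n selective structural patterns. If the n×2n pattern [Ā^λ B̄] obtained by concatenating Ā^λ = Ā − λĒ and B̄ contains a ramp structure up to permutation, then (Ē, Ā, B̄) is selectively strongly structurally controllable (SSSC). -/

import Mathlib

inductive Pat : Type
  | zero : Pat
  | cross : Pat
  | any : Pat
deriving DecidableEq

/-- `X` is a realization of the selective structural pattern `Xbar`:
zero entries are zero, cross entries are nonzero, `any` entries are arbitrary. -/
def IsRealization {α β F : Type*} [Zero F]
    (Xbar : Matrix α β Pat) (X : Matrix α β F) : Prop :=
  ∀ i j, (Xbar i j = Pat.zero → X i j = 0) ∧ (Xbar i j = Pat.cross → X i j ≠ 0)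

/-- The complexification of a real matrix. -/
noncomputable def toC {α β : Type*} (X : Matrix α β ℝ) : Matrix α β ℂ :=
  X.map Complex.ofReal

/-- The pencil `A - λ E` is regular, i.e. `det (A - λ E)` is not identically zero. -/
def RegularPencil {n : ℕ} (E A : Matrix (Fin n) (Fin n) ℝ) : Prop :=
  ∃ μ : ℂ, (toC A - μ • toC E).det ≠ 0

/-- Selective strong structural controllability. -/
def SSSC {n : ℕ} {p : Type*} [Fintype p]
    (Ebar Abar : Matrix (Fin n) (Fin n) Pat) (Bbar : Matrix (Fin n) p Pat) : Prop :=
  ∀ (E A : Matrix (Fin n) (Fin n) ℝ) (B : Matrix (Fin n) p ℝ),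
    IsRealization Ebar E → IsRealization Abar A → RegularPencil E A →
    IsRealization Bbar B →
    ∀ lam : ℂ, (Matrix.fromCols (toC A - lam • toC E) (toC B)).rank = n

/-- Selective strong structural observability. -/
def SSSO {n : ℕ} {m : Type*} [Fintype m]
    (Ebar Abar : Matrix (Fin n) (Fin n) Pat) (Cbar : Matrix m (Fin n) Pat) : Prop :=
  ∀ (E A : Matrix (Fin n) (Fin n) ℝ) (C : Matrix m (Fin n) ℝ),
    IsRealization Ebar E → IsRealization Abar A → RegularPencil E A →
    IsRealization Cbar C →
    ∀ lam : ℂ, (Matrix.fromRows (toC A - lam • toC E) (toC C)).rank = n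

/-- A pattern with no `⊗` entries, i.e. a `{0,×}`-pattern. -/
def ZeroCross {α β : Type*} (X : Matrix α β Pat) : Prop :=
  ∀ i j, X i j ≠ Pat.any

/-- Number of `×` entries of a pattern. -/
def crossCount {α β : Type*} [Fintype α] [Fintype β] (X : Matrix α β Pat) : ℕ :=
  ∑ i, ∑ j, if X i j = Pat.cross then 1 else 0

/-- The pattern `Ā - λ Ē`. -/
def patLam {n : ℕ} (Ebar Abar : Matrix (Fin n) (Fin n) Pat) :
    Matrix (Fin n) (Fin n) Pat :=
  Matrix.of fun i j =>
    match Abar i j, Ebar i j with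
    | Pat.cross, Pat.zero => Pat.cross
    | Pat.zero, Pat.zero => Pat.zero
    | _, _ => Pat.any


/-- if the concatenated pattern `[Ā^λ  B̄]` contains a ramp structure up to
permutation, then `(Ē, Ā, B̄)` is selectively strongly structurally controllable. -/
theorem ramp_implies_SSSC {n : ℕ}
    (Ebar Abar Bbar : Matrix (Fin n) (Fin n) Pat)
    (ρ : Equiv.Perm (Fin n)) (c : Fin n → Fin n ⊕ Fin n) (hc : Function.Injective c)
    (hdiag : ∀ i, Matrix.fromCols (patLam Ebar Abar) Bbar (ρ i) (c i) = Pat.cross)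
    (hzero : ∀ i j : Fin n, i < j →
      Matrix.fromCols (patLam Ebar Abar) Bbar (ρ i) (c j) = Pat.zero) :
    SSSC Ebar Abar Bbar := by
  intro E A B hE hA _hreg hB lam
  set M : Matrix (Fin n) (Fin n ⊕ Fin n) ℂ :=
    Matrix.fromCols (toC A - lam • toC E) (toC B) with hM
  -- entry facts
  have hcross : ∀ i cc, Matrix.fromCols (patLam Ebar Abar) Bbar i cc = Pat.cross →
      M i cc ≠ 0 := by
    intro i cc h
    cases cc with
    | inl j =>
      simp only [Matrix.fromCols_apply_inl] at h ⊢
      have hAij : Abar i j = Pat.cross ∧ Ebar i j = Pat.zero := by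
        cases h1 : Abar i j <;> cases h2 : Ebar i j <;>
          simp [patLam, h1, h2] at h ⊢
      have hAne : A i j ≠ 0 := ((hA i j).2 hAij.1)
      have hEz : E i j = 0 := ((hE i j).1 hAij.2)
      simp [hM, toC, Matrix.sub_apply, Matrix.smul_apply, Matrix.map_apply, hEz,
        Complex.ofReal_eq_zero, hAne]
    | inr j =>
      simp only [Matrix.fromCols_apply_inr] at h ⊢
      have : B i j ≠ 0 := ((hB i j).2 h)
      simp [hM, toC, Matrix.map_apply, Complex.ofReal_eq_zero, this]
  have hzeroM : ∀ i cc, Matrix.fromCols (patLam Ebar Abar) Bbar i cc = Pat.zero →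
      M i cc = 0 := by
    intro i cc h
    cases cc with
    | inl j =>
      simp only [Matrix.fromCols_apply_inl] at h ⊢
      have hAij : Abar i j = Pat.zero ∧ Ebar i j = Pat.zero := by
        cases h1 : Abar i j <;> cases h2 : Ebar i j <;>
          simp [patLam, h1, h2] at h ⊢
      have hAz : A i j = 0 := ((hA i j).1 hAij.1)
      have hEz : E i j = 0 := ((hE i j).1 hAij.2)
      simp [hM, toC, Matrix.sub_apply, Matrix.smul_apply, Matrix.map_apply, hEz, hAz]
    | inr j =>
      simp only [Matrix.fromCols_apply_inr] at h ⊢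
      have : B i j = 0 := ((hB i j).1 h)
      simp [hM, toC, Matrix.map_apply, this]
  -- the selected square submatrix
  set N : Matrix (Fin n) (Fin n) ℂ := M.submatrix ρ c with hN
  have hNdiag : ∀ i, N i i ≠ 0 := fun i => hcross (ρ i) (c i) (hdiag i)
  have hNzero : ∀ i j, i < j → N i j = 0 := fun i j hij =>
    hzeroM (ρ i) (c j) (hzero i j hij)
  have hdet : N.det ≠ 0 := by
    have : N.det = ∏ i, N i i := by
      apply Matrix.det_of_lowerTriangular
      intro i j hij
      exact hNzero i j hij
    rw [this]
    exact Finset.prod_ne_zero_iff.2 fun i _ => hNdiag i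
  have hNrank : N.rank = n := by
    have := Matrix.rank_of_isUnit N (Matrix.isUnit_iff_isUnit_det N |>.2 hdet.isUnit)
    simpa using this
  -- N = Q * M * P
  set Q : Matrix (Fin n) (Fin n) ℂ := Matrix.of fun i l => if l = ρ i then 1 else 0 with hQ
  set P : Matrix (Fin n ⊕ Fin n) (Fin n) ℂ := Matrix.of fun k j => if k = c j then 1 else 0
    with hP
  have hfact : N = Q * M * P := by
    ext i j
    simp only [hN, hQ, hP, Matrix.submatrix_apply, Matrix.mul_apply, Matrix.of_apply]
    symm
    rw [Finset.sum_eq_single (c j)]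
    · rw [if_pos rfl, mul_one, Finset.sum_eq_single (ρ i)]
      · simp
      · intro k _ hk; simp [hk]
      · simp
    · intro k _ hk; simp [hk]
    · simp
  have hle1 : N.rank ≤ M.rank := by
    rw [hfact]
    exact le_trans (Matrix.rank_mul_le_left (Q * M) P)
      (Matrix.rank_mul_le_right Q M)
  have hle2 : M.rank ≤ n := by
    simpa using Matrix.rank_le_card_height M
  omega
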